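/- Let λ₁,…,λ_p be distinct positive reals, λ = (λ₁,…,λ_p)ᵀ, Λ = diag(λ), √λ the entrywise square root, and n a positive real. Let ζ₁ ≤ … ≤ ζ_p be the eigenvalues of the symmetric matrix Λ − (1/n)√λ√λᵀ, and let m(z) = (1/p) Σᵢ 1/(λᵢ − z). Then for every z ∈ ℂ with z ∉ {λ₁,…,λ_p}, 1 − p/n − (p/n) z m(z) = ∏_{i=1}^p (z − ζᵢ) / ∏_{i=1}^p (z − λᵢ); in particular the zeros of z ↦ 1 − p/n − (p/n) z m(z) are exactly ζ₁,…,ζ_p, and consequently z/(1 − p/n − (p/n) z m(z)) = z · ∏ᵢ (z − λᵢ) / ∏ᵢ (z − ζᵢ). -/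
import Mathlib


open Matrix Polynomial
open scoped BigOperators

noncomputable section

lemma eval_charpoly_det' {p : ℕ} (M : Matrix (Fin p) (Fin p) ℝ) (z : ℝ) :
    M.charpoly.eval z = (Matrix.of fun i j => (if i = j then z else 0) - M i j).det := by
  rw [Matrix.charpoly, ← Polynomial.coe_evalRingHom, RingHom.map_det]
  congr 1
  ext i j
  by_cases h : i = j <;>
    simp [h, Matrix.charmatrix_apply, Matrix.map_apply, Matrix.one_apply, Matrix.diagonal_apply]

lemma key_det' {p : ℕ} (n : ℝ) (lam : Fin p → ℝ) (hlam : ∀ i, 0 ≤ lam i)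
    (z : ℝ) (hz : ∀ i, z ≠ lam i) :
    (Matrix.of fun i j => (if i = j then z else 0) -
        (Matrix.diagonal lam -
          n⁻¹ • Matrix.of (fun i j => Real.sqrt (lam i) * Real.sqrt (lam j))) i j).det
      = (∏ i, (z - lam i)) * (1 + n⁻¹ * ∑ i, lam i * (z - lam i)⁻¹) := by
  have hzi : ∀ i, z - lam i ≠ 0 := fun i => sub_ne_zero.mpr (hz i)
  have hdu : ∀ i j, (z - lam i) * (n⁻¹ * Real.sqrt (lam i) / (z - lam i) * Real.sqrt (lam j))
      = n⁻¹ * Real.sqrt (lam i) * Real.sqrt (lam j) := fun i j => by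
    rw [← mul_assoc, mul_comm (z - lam i), div_mul_cancel₀ _ (hzi i)]
  have hcr : ∀ (u w : Fin p → ℝ) i j,
      (Matrix.replicateCol Unit u * Matrix.replicateRow Unit w) i j = u i * w j := fun u w i j => by
    simp [Matrix.mul_apply]
  have hfact : (Matrix.of fun i j => (if i = j then z else 0) -
        (Matrix.diagonal lam -
          n⁻¹ • Matrix.of (fun i j => Real.sqrt (lam i) * Real.sqrt (lam j))) i j)
      = Matrix.diagonal (fun i => z - lam i) *
        (1 + Matrix.replicateCol Unit (fun i => n⁻¹ * Real.sqrt (lam i) / (z - lam i)) *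
             Matrix.replicateRow Unit (fun j => Real.sqrt (lam j))) := by
    ext i j
    rw [Matrix.diagonal_mul]
    simp only [Matrix.add_apply, Matrix.one_apply, hcr, Matrix.of_apply, Matrix.sub_apply,
      Matrix.smul_apply, Matrix.diagonal_apply, smul_eq_mul]
    by_cases h : i = j
    · subst h
      rw [if_pos rfl, if_pos rfl, if_pos rfl, mul_add, mul_one, hdu i i]
      ring
    · rw [if_neg h, if_neg h, if_neg h, mul_add, mul_zero, zero_add, hdu i j]
      ring
  rw [hfact, Matrix.det_mul, Matrix.det_diagonal, Matrix.det_one_add_replicateCol_mul_replicateRow]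
  congr 2
  rw [dotProduct, Finset.mul_sum]
  refine Finset.sum_congr rfl fun i _ => ?_
  have h2 : Real.sqrt (lam i) * Real.sqrt (lam i) = lam i := Real.mul_self_sqrt (hlam i)
  calc Real.sqrt (lam i) * (n⁻¹ * Real.sqrt (lam i) / (z - lam i))
      = n⁻¹ * (Real.sqrt (lam i) * Real.sqrt (lam i) * (z - lam i)⁻¹) := by
        rw [div_eq_mul_inv]; ring
    _ = n⁻¹ * (lam i * (z - lam i)⁻¹) := by rw [h2]

lemma prod_add_sum_erase' {p : ℕ} {K : Type*} [Field K] (c : K) (a : Fin p → K) (z : K)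
    (hz : ∀ i, z - a i ≠ 0) :
    (∏ i, (z - a i)) + c * ∑ i, (a i * ∏ k ∈ Finset.univ.erase i, (z - a k))
      = (∏ i, (z - a i)) * (1 + c * ∑ i, a i * (z - a i)⁻¹) := by
  have key : ∀ i : Fin p, (∏ k, (z - a k)) * (a i * (z - a i)⁻¹)
      = a i * ∏ k ∈ Finset.univ.erase i, (z - a k) := by
    intro i
    calc (∏ k, (z - a k)) * (a i * (z - a i)⁻¹)
        = a i * ((z - a i)⁻¹ * ((z - a i) * ∏ k ∈ Finset.univ.erase i, (z - a k))) := by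
          rw [← Finset.mul_prod_erase Finset.univ (fun k => z - a k) (Finset.mem_univ i)]
          ring
      _ = a i * ∏ k ∈ Finset.univ.erase i, (z - a k) := by
          rw [inv_mul_cancel_left₀ (hz i)]
  rw [mul_add, mul_one]
  congr 1
  rw [mul_left_comm (∏ i, (z - a i)) c]
  congr 1
  rw [Finset.mul_sum]
  exact (Finset.sum_congr rfl fun i _ => key i).symm

theorem rational_form_psi
    (par : ℕ) (hpar : 0 < par) (n : ℝ) (hn : 0 < n)
    (lam : Fin par → ℝ) (hlam : ∀ i, 0 < lam i)
    (hdist : Function.Injective lam)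
    (hmono : Monotone lam)
    -- ζ₁ ≤ … ≤ ζ_p : the eigenvalues of the symmetric matrix Λ − (1/n)√λ√λᵀ
    (zeta : Fin par → ℝ) (hzeta_mono : Monotone zeta)
    (hzeta : (Matrix.diagonal lam -
        n⁻¹ • Matrix.of (fun i j => Real.sqrt (lam i) * Real.sqrt (lam j))).charpoly
      = ∏ i, (X - C (zeta i))) :
    -- the rational form of 1 − p/n − (p/n) z m(z)
    (∀ z : ℂ, (∀ i, z ≠ (lam i : ℂ)) →
      1 - (par : ℂ) / (n : ℂ) - ((par : ℂ) / (n : ℂ)) * z *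
          ((par : ℂ)⁻¹ * ∑ i, ((lam i : ℂ) - z)⁻¹) =
        (∏ i, (z - (zeta i : ℂ))) / (∏ i, (z - (lam i : ℂ)))) ∧
    -- no ζᵢ coincides with any λⱼ, and the zeros are exactly the ζᵢ
    (∀ i j, (zeta i : ℂ) ≠ (lam j : ℂ)) ∧
    (∀ z : ℂ, (∀ i, z ≠ (lam i : ℂ)) →
      ((1 - (par : ℂ) / (n : ℂ) - ((par : ℂ) / (n : ℂ)) * z *
          ((par : ℂ)⁻¹ * ∑ i, ((lam i : ℂ) - z)⁻¹) = 0) ↔ ∃ i, z = (zeta i : ℂ))) ∧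
    -- consequently the rational form of φ
    (∀ z : ℂ, (∀ i, z ≠ (lam i : ℂ)) →
      z / (1 - (par : ℂ) / (n : ℂ) - ((par : ℂ) / (n : ℂ)) * z *
          ((par : ℂ)⁻¹ * ∑ i, ((lam i : ℂ) - z)⁻¹)) =
        z * (∏ i, (z - (lam i : ℂ))) / (∏ i, (z - (zeta i : ℂ)))) := by
  have hn0 : n ≠ 0 := ne_of_gt hn
  have hnC : (n : ℂ) ≠ 0 := by exact_mod_cast hn0
  have hpC : (par : ℂ) ≠ 0 := Nat.cast_ne_zero.mpr hpar.ne'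
  -- the polynomial Q over ℝ
  set Q : ℝ[X] := (∏ i, (X - C (lam i))) +
      C n⁻¹ * ∑ i, (C (lam i) * ∏ k ∈ Finset.univ.erase i, (X - C (lam k))) with hQ
  have hQeval : ∀ z : ℝ, Q.eval z = (∏ i, (z - lam i)) +
      n⁻¹ * ∑ i, (lam i * ∏ k ∈ Finset.univ.erase i, (z - lam k)) := by
    intro z
    simp [hQ, eval_prod, eval_finset_sum]
  -- charpoly = Q via evaluation at infinitely many points
  have hinf : {z : ℝ | ∀ i, z ≠ lam i}.Infinite := by
    have : {z : ℝ | ∀ i, z ≠ lam i} = (Set.range lam)ᶜ := by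
      ext z
      simp [Set.mem_range, not_exists, eq_comm]
    rw [this]
    exact (Set.finite_range lam).infinite_compl
  have hcharQ : (Matrix.diagonal lam -
      n⁻¹ • Matrix.of (fun i j => Real.sqrt (lam i) * Real.sqrt (lam j))).charpoly = Q := by
    apply Polynomial.eq_of_infinite_eval_eq
    apply Set.Infinite.mono _ hinf
    intro z hz
    have hz' : ∀ i, z ≠ lam i := hz
    have hzi : ∀ i, z - lam i ≠ 0 := fun i => sub_ne_zero.mpr (hz' i)
    simp only [Set.mem_setOf_eq]
    rw [eval_charpoly_det', key_det' n lam (fun i => (hlam i).le) z hz', hQeval z,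
      prod_add_sum_erase' n⁻¹ lam z hzi]
  have hPQ : (∏ i, (X - C (zeta i))) = Q := hzeta.symm.trans hcharQ
  -- complex version of the polynomial identity
  have hPC : ∀ z : ℂ, (∏ i, (z - (zeta i : ℂ))) = (∏ i, (z - (lam i : ℂ))) +
      (n : ℂ)⁻¹ * ∑ i, ((lam i : ℂ) * ∏ k ∈ Finset.univ.erase i, (z - (lam k : ℂ))) := by
    intro z
    have h := congrArg (Polynomial.aeval z) hPQ
    simpa [hQ, map_prod, map_sum, Complex.ofReal_inv] using h
  -- part 2
  have part2 : ∀ i j, (zeta i : ℂ) ≠ (lam j : ℂ) := by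
    intro i j
    have h := hPC (lam j : ℂ)
    have hzero : (∏ i', ((lam j : ℂ) - (lam i' : ℂ))) = 0 :=
      Finset.prod_eq_zero (Finset.mem_univ j) (sub_self ((lam j : ℂ)))
    have hsum : (∑ i', ((lam i' : ℂ) * ∏ k ∈ Finset.univ.erase i', ((lam j : ℂ) - (lam k : ℂ))))
        = (lam j : ℂ) * ∏ k ∈ Finset.univ.erase j, ((lam j : ℂ) - (lam k : ℂ)) := by
      apply Finset.sum_eq_single j
      · intro b _ hb
        rw [Finset.prod_eq_zero (Finset.mem_erase.mpr ⟨hb.symm, Finset.mem_univ j⟩)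
          (sub_self ((lam j : ℂ))), mul_zero]
      · intro hj; exact absurd (Finset.mem_univ j) hj
    rw [hzero, zero_add, hsum] at h
    have hne : ((lam j : ℂ)) * ∏ k ∈ Finset.univ.erase j, ((lam j : ℂ) - (lam k : ℂ)) ≠ 0 := by
      apply mul_ne_zero
      · exact_mod_cast (hlam j).ne'
      · apply Finset.prod_ne_zero_iff.mpr
        intro k hk
        have hkj : k ≠ j := (Finset.mem_erase.mp hk).1
        rw [sub_ne_zero]
        exact_mod_cast fun hh => hkj (hdist hh).symm
    have hprod : (∏ i', ((lam j : ℂ) - (zeta i' : ℂ))) ≠ 0 := by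
      rw [h]; exact mul_ne_zero (inv_ne_zero hnC) hne
    have hfac := Finset.prod_ne_zero_iff.mp hprod i (Finset.mem_univ i)
    exact fun he => hfac (by rw [he, sub_self])
  -- part 1
  have part1 : ∀ z : ℂ, (∀ i, z ≠ (lam i : ℂ)) →
      1 - (par : ℂ) / (n : ℂ) - ((par : ℂ) / (n : ℂ)) * z *
          ((par : ℂ)⁻¹ * ∑ i, ((lam i : ℂ) - z)⁻¹) =
        (∏ i, (z - (zeta i : ℂ))) / (∏ i, (z - (lam i : ℂ))) := by
    intro z hz
    have hzi : ∀ i, z - (lam i : ℂ) ≠ 0 := fun i => sub_ne_zero.mpr (hz i)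
    have hzi' : ∀ i, (lam i : ℂ) - z ≠ 0 := fun i => sub_ne_zero.mpr fun hh => hz i hh.symm
    have hprodne : (∏ i, (z - (lam i : ℂ))) ≠ 0 :=
      Finset.prod_ne_zero_iff.mpr fun i _ => hzi i
    have hRHS : (∏ i, (z - (zeta i : ℂ))) = (∏ i, (z - (lam i : ℂ))) *
        (1 + (n : ℂ)⁻¹ * ∑ i, (lam i : ℂ) * (z - (lam i : ℂ))⁻¹) := by
      rw [hPC z, prod_add_sum_erase' _ _ _ hzi]
    have hterm : ∀ i : Fin par, ((lam i : ℂ)) * (z - (lam i : ℂ))⁻¹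
        = -1 - z * ((lam i : ℂ) - z)⁻¹ := by
      intro i
      have h1 := hzi i
      have h2 := hzi' i
      field_simp
      ring
    have hsum : ∑ i, ((lam i : ℂ)) * (z - (lam i : ℂ))⁻¹
        = -(par : ℂ) - z * ∑ i, ((lam i : ℂ) - z)⁻¹ := by
      rw [Finset.sum_congr rfl fun i _ => hterm i]
      rw [Finset.sum_sub_distrib, Finset.sum_const, Finset.card_univ, Fintype.card_fin,
        ← Finset.mul_sum]
      simp
    have hFstd : 1 - (par : ℂ) / (n : ℂ) - ((par : ℂ) / (n : ℂ)) * z *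
        ((par : ℂ)⁻¹ * ∑ i, ((lam i : ℂ) - z)⁻¹)
        = 1 + (n : ℂ)⁻¹ * ∑ i, ((lam i : ℂ)) * (z - (lam i : ℂ))⁻¹ := by
      rw [hsum]
      field_simp
      ring
    rw [hFstd, hRHS]
    exact (mul_div_cancel_left₀ _ hprodne).symm
  refine ⟨part1, part2, ?_, ?_⟩
  · intro z hz
    have hzi : ∀ i, z - (lam i : ℂ) ≠ 0 := fun i => sub_ne_zero.mpr (hz i)
    have hprodne : (∏ i, (z - (lam i : ℂ))) ≠ 0 :=
      Finset.prod_ne_zero_iff.mpr fun i _ => hzi i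
    rw [part1 z hz, _root_.div_eq_zero_iff]
    constructor
    · rintro (h0 | h0)
      · obtain ⟨i, _, hi⟩ := Finset.prod_eq_zero_iff.mp h0
        exact ⟨i, sub_eq_zero.mp hi⟩
      · exact absurd h0 hprodne
    · rintro ⟨i, rfl⟩
      exact Or.inl (Finset.prod_eq_zero (Finset.mem_univ i) (sub_self ((zeta i : ℂ))))
  · intro z hz
    rw [part1 z hz, div_div_eq_mul_div]
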